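/- Let ξ₁, ξ₂ ∈ ℂ and set q := |ξ₁|² − |ξ₂|². For Z ∈ ℂ with |Z| < 1 define R(Z) := 2·|Z·ξ₁ − ξ₂|²/(1 − |Z|²) and G(Z) := ∫_1^∞ exp(−2π·R(Z)·t)/t dt. Then at every point Z = x + i·y with |Z| < 1 and Z·ξ₁ ≠ ξ₂, the function G (viewed as a function of the two real variables x, y) is twice continuously differentiable and its Euclidean Laplacian satisfies (∂²G/∂x² + ∂²G/∂y²)(Z) = (8π·(R(Z) + 2q) − 4)·exp(−2π·R(Z))/(1 − |Z|²)². -/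

import Mathlib

open MeasureTheory Real

/-- The majorant `R(Z) = 2|Zξ₁ - ξ₂|²/(1 - |Z|²)` on the unit disc. -/
noncomputable def Rmaj (ξ₁ ξ₂ : ℂ) (Z : ℂ) : ℝ :=
  2 * ‖Z * ξ₁ - ξ₂‖ ^ 2 / (1 - ‖Z‖ ^ 2)

/-- The GreenFn function `G(Z) = ∫_1^∞ e^{-2π R(Z) t}/t dt`. -/
noncomputable def GreenFn (ξ₁ ξ₂ : ℂ) (Z : ℂ) : ℝ :=
  ∫ t in Set.Ioi (1 : ℝ), Real.exp (-2 * π * Rmaj ξ₁ ξ₂ Z * t) / t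

open Set

noncomputable def Ffun : ℝ → ℝ := fun r => ∫ s in Set.Ioi r, Real.exp (-(2*π)*s)/s

lemma g_int {c : ℝ} (hc : 0 < c) :
    IntegrableOn (fun s => Real.exp (-(2*π)*s)/s) (Ioi c) := by
  have hexp : IntegrableOn (fun s => Real.exp (-(2*π)*s)) (Ioi c) :=
    exp_neg_integrableOn_Ioi c (by positivity)
  refine Integrable.mono' (hexp.const_mul c⁻¹) ?_ ?_
  · refine (ContinuousOn.aestronglyMeasurable ?_ measurableSet_Ioi)
    exact ContinuousOn.div (by fun_prop) continuousOn_id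
      (fun s hs => ne_of_gt (hc.trans hs))
  · refine (ae_restrict_iff' measurableSet_Ioi).2 (Filter.Eventually.of_forall ?_)
    intro s hs
    have hs0 : 0 < s := hc.trans hs
    rw [Real.norm_eq_abs, abs_div, abs_of_nonneg (Real.exp_pos _).le, abs_of_pos hs0]
    rw [div_le_iff₀ hs0]
    calc Real.exp (-(2*π)*s) = c⁻¹ * Real.exp (-(2*π)*s) * c := by field_simp
    _ ≤ c⁻¹ * Real.exp (-(2*π)*s) * s := by
        apply mul_le_mul_of_nonneg_left (le_of_lt hs) (by positivity)

lemma F_split {u v : ℝ} (hu : 0 < u) (huv : u ≤ v) :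
    Ffun u = (∫ s in u..v, Real.exp (-(2*π)*s)/s) + Ffun v := by
  rw [intervalIntegral.integral_of_le huv]
  unfold Ffun
  rw [← setIntegral_union (Set.Ioc_disjoint_Ioi le_rfl) measurableSet_Ioi
    ((g_int hu).mono_set Set.Ioc_subset_Ioi_self) (g_int (hu.trans_le huv)),
    Set.Ioc_union_Ioi_eq_Ioi huv]

lemma hasDerivAt_F {r : ℝ} (hr : 0 < r) :
    HasDerivAt Ffun (-(Real.exp (-(2*π)*r)/r)) r := by
  set c := r/2 with hc
  have hc0 : 0 < c := by positivity
  have hcr : c < r := by rw [hc]; linarith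
  have hInt : IntervalIntegrable (fun s => Real.exp (-(2*π)*s)/s) volume c r := by
    rw [intervalIntegrable_iff_integrableOn_Ioc_of_le hcr.le]
    exact (g_int hc0).mono_set Set.Ioc_subset_Ioi_self
  have hmeas : StronglyMeasurableAtFilter (fun s => Real.exp (-(2*π)*s)/s) (nhds r) volume :=
    ⟨Ioi c, Ioi_mem_nhds hcr, (ContinuousOn.div (by fun_prop) continuousOn_id
      (fun s hs => ne_of_gt (hc0.trans hs))).aestronglyMeasurable measurableSet_Ioi⟩
  have hcont : ContinuousAt (fun s => Real.exp (-(2*π)*s)/s) r :=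
    ContinuousAt.div (by fun_prop) continuousAt_id hr.ne'
  have h1 : HasDerivAt (fun s => Ffun c - ∫ u in c..s, Real.exp (-(2*π)*u)/u)
      (-(Real.exp (-(2*π)*r)/r)) r :=
    (intervalIntegral.integral_hasDerivAt_right hInt hmeas hcont).const_sub (Ffun c)
  refine h1.congr_of_eventuallyEq ?_
  filter_upwards [Ioi_mem_nhds hcr] with s hs
  have := F_split hc0 (le_of_lt hs)
  linarith [this]

lemma F_cd : ContDiffOn ℝ 2 Ffun (Ioi 0) := by
  have hdiff : DifferentiableOn ℝ Ffun (Ioi 0) := fun s hs =>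
    (hasDerivAt_F hs).differentiableAt.differentiableWithinAt
  rw [show (2 : WithTop ℕ∞) = 1+1 from by norm_num,
    contDiffOn_succ_iff_deriv_of_isOpen isOpen_Ioi]
  refine ⟨hdiff, fun h => by simp at h, ?_⟩
  have hcd : ContDiffOn ℝ 1 (fun s : ℝ => -(Real.exp (-(2*π)*s)/s)) (Ioi 0) := by
    apply ContDiffOn.neg
    exact ContDiffOn.div (by fun_prop) contDiffOn_id (fun s hs => ne_of_gt hs)
  exact hcd.congr (fun s hs => (hasDerivAt_F hs).deriv)

lemma green_eq (ξ₁ ξ₂ : ℂ) (Z : ℂ) (h : 0 < Rmaj ξ₁ ξ₂ Z) :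
    GreenFn ξ₁ ξ₂ Z = Ffun (Rmaj ξ₁ ξ₂ Z) := by
  set R := Rmaj ξ₁ ξ₂ Z with hR
  unfold GreenFn Ffun
  rw [show (∫ t in Set.Ioi (1:ℝ), Real.exp (-2 * π * R * t) / t)
      = ∫ t in Set.Ioi (1:ℝ), R * ((fun s => Real.exp (-(2*π)*s)/s) (R * t)) from ?_]
  · rw [MeasureTheory.integral_const_mul,
      integral_comp_mul_left_Ioi (fun s => Real.exp (-(2*π)*s)/s) 1 h, mul_one,
      smul_eq_mul, ← mul_assoc, mul_inv_cancel₀ h.ne', one_mul]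
  · refine setIntegral_congr_fun measurableSet_Ioi (fun t ht => ?_)
    have ht0 : (0:ℝ) < t := lt_trans one_pos ht
    simp only
    rw [show -(2*π)*(R*t) = -2*π*R*t by ring]
    field_simp

noncomputable def Wfun (α β γ₁ γ₂ e : ℝ) : ℝ → ℝ := fun t =>
  2*((t*α-γ₁)^2+(t*β-γ₂)^2)/(1 - t^2 - e)

noncomputable def W1fun (α β γ₁ γ₂ e : ℝ) : ℝ → ℝ := fun t =>
  (4*(α*(t*α-γ₁)+β*(t*β-γ₂))*(1-t^2-e) + 4*t*((t*α-γ₁)^2+(t*β-γ₂)^2))/(1-t^2-e)^2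

noncomputable def W2fun (α β γ₁ γ₂ e : ℝ) : ℝ → ℝ := fun t =>
  ((4*(α^2+β^2)*(1-t^2-e) + 4*((t*α-γ₁)^2+(t*β-γ₂)^2))*(1-t^2-e)
    + 4*t*(4*(α*(t*α-γ₁)+β*(t*β-γ₂))*(1-t^2-e) + 4*t*((t*α-γ₁)^2+(t*β-γ₂)^2)))
    /(1-t^2-e)^3

lemma hasDerivAt_W (α β γ₁ γ₂ e t : ℝ) (h : 1 - t^2 - e ≠ 0) :
    HasDerivAt (Wfun α β γ₁ γ₂ e) (W1fun α β γ₁ γ₂ e t) t := by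
  unfold Wfun W1fun
  have hnum : HasDerivAt (fun t : ℝ => 2*((t*α-γ₁)^2+(t*β-γ₂)^2))
      (2*((2:ℕ)*(t*α-γ₁)^1*(1*α) + (2:ℕ)*(t*β-γ₂)^1*(1*β))) t := by
    exact ((((hasDerivAt_id t).mul_const α).sub_const γ₁).pow 2 |>.add
      ((((hasDerivAt_id t).mul_const β).sub_const γ₂).pow 2)).const_mul 2
  have hden : HasDerivAt (fun t : ℝ => 1 - t^2 - e) (-((2:ℕ)*t^1)) t := by
    exact ((hasDerivAt_pow 2 t).const_sub 1).sub_const e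
  have h2 : HasDerivAt (fun t : ℝ => 2*((t*α-γ₁)^2+(t*β-γ₂)^2)/(1 - t^2 - e)) _ t :=
    hnum.div hden h
  convert h2 using 1
  field_simp
  ring

lemma hasDerivAt_W1 (α β γ₁ γ₂ e t : ℝ) (h : 1 - t^2 - e ≠ 0) :
    HasDerivAt (W1fun α β γ₁ γ₂ e) (W2fun α β γ₁ γ₂ e t) t := by
  unfold W1fun W2fun
  have hP : HasDerivAt (fun t : ℝ => t*α-γ₁) (1*α) t :=
    ((hasDerivAt_id t).mul_const α).sub_const γ₁
  have hQ : HasDerivAt (fun t : ℝ => t*β-γ₂) (1*β) t :=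
    ((hasDerivAt_id t).mul_const β).sub_const γ₂
  have hD : HasDerivAt (fun t : ℝ => 1 - t^2 - e) (-((2:ℕ)*t^1)) t :=
    ((hasDerivAt_pow 2 t).const_sub 1).sub_const e
  have hA : HasDerivAt (fun t : ℝ => 4*(α*(t*α-γ₁)+β*(t*β-γ₂)))
      (4*(α*(1*α)+β*(1*β))) t :=
    ((hP.const_mul α).add (hQ.const_mul β)).const_mul 4
  have hN : HasDerivAt (fun t : ℝ => (t*α-γ₁)^2+(t*β-γ₂)^2)
      ((2:ℕ)*(t*α-γ₁)^1*(1*α) + (2:ℕ)*(t*β-γ₂)^1*(1*β)) t :=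
    (hP.pow 2).add (hQ.pow 2)
  have hC : HasDerivAt (fun t : ℝ => 4*t) 4 t := by
    simpa using (hasDerivAt_id t).const_mul (4:ℝ)
  have hnum := (hA.mul hD).add (hC.mul hN)
  have hden := hD.pow 2
  have h2 : HasDerivAt (fun t : ℝ => (4*(α*(t*α-γ₁)+β*(t*β-γ₂))*(1-t^2-e) + 4*t*((t*α-γ₁)^2+(t*β-γ₂)^2))/(1-t^2-e)^2) _ t :=
    hnum.div hden (pow_ne_zero 2 h)
  convert h2 using 1
  simp only [Pi.add_apply, Pi.mul_apply]
  field_simp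
  ring

lemma second_deriv_dir (α β γ₁ γ₂ e t0 : ℝ) (hD : 0 < 1 - t0^2 - e)
    (hN : 0 < (t0*α-γ₁)^2+(t0*β-γ₂)^2) :
    iteratedDeriv 2 (fun t => Ffun (Wfun α β γ₁ γ₂ e t)) t0
      = Real.exp (-(2*π)*Wfun α β γ₁ γ₂ e t0) *
        ((2*π*(Wfun α β γ₁ γ₂ e t0)+1) * (W1fun α β γ₁ γ₂ e t0)^2/(Wfun α β γ₁ γ₂ e t0)^2
          - (W2fun α β γ₁ γ₂ e t0)/(Wfun α β γ₁ γ₂ e t0)) := by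
  set U : Set ℝ := {t | 0 < 1 - t^2 - e ∧ 0 < (t*α-γ₁)^2+(t*β-γ₂)^2} with hU
  have hUopen : IsOpen U := by
    have h1 : IsOpen {t : ℝ | 0 < 1 - t^2 - e} := isOpen_lt continuous_const (by fun_prop)
    have h2 : IsOpen {t : ℝ | 0 < (t*α-γ₁)^2+(t*β-γ₂)^2} :=
      isOpen_lt continuous_const (by fun_prop)
    exact h1.inter h2
  have ht0 : t0 ∈ U := ⟨hD, hN⟩
  have hWpos : ∀ t ∈ U, 0 < Wfun α β γ₁ γ₂ e t := fun t ht =>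
    div_pos (by have := ht.2; positivity) ht.1
  have hder : ∀ t ∈ U, HasDerivAt (fun t => Ffun (Wfun α β γ₁ γ₂ e t))
      (-(Real.exp (-(2*π)*Wfun α β γ₁ γ₂ e t)/ Wfun α β γ₁ γ₂ e t) * W1fun α β γ₁ γ₂ e t) t :=
    fun t ht => (hasDerivAt_F (hWpos t ht)).comp t (hasDerivAt_W α β γ₁ γ₂ e t ht.1.ne')
  have hev : deriv (fun t => Ffun (Wfun α β γ₁ γ₂ e t)) =ᶠ[nhds t0]
      fun t => -(Real.exp (-(2*π)*Wfun α β γ₁ γ₂ e t)/ Wfun α β γ₁ γ₂ e t) * W1fun α β γ₁ γ₂ e t := by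
    filter_upwards [hUopen.mem_nhds ht0] with t ht using (hder t ht).deriv
  have h2 : iteratedDeriv 2 (fun t => Ffun (Wfun α β γ₁ γ₂ e t)) t0
      = deriv (deriv (fun t => Ffun (Wfun α β γ₁ γ₂ e t))) t0 := by
    rw [show (2:ℕ) = 1+1 from rfl, iteratedDeriv_succ, iteratedDeriv_one]
  rw [h2, hev.deriv_eq]
  have hW := hasDerivAt_W α β γ₁ γ₂ e t0 hD.ne'
  have hW1 := hasDerivAt_W1 α β γ₁ γ₂ e t0 hD.ne'
  have hWn : Wfun α β γ₁ γ₂ e t0 ≠ 0 := (hWpos t0 ht0).ne'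
  have hexp : HasDerivAt (fun t => Real.exp (-(2*π)*Wfun α β γ₁ γ₂ e t))
      (Real.exp (-(2*π)*Wfun α β γ₁ γ₂ e t0) * (-(2*π)*W1fun α β γ₁ γ₂ e t0)) t0 :=
    (hW.const_mul (-(2*π))).exp
  have hq := hexp.div hW hWn
  have hφ := (hq.neg).mul hW1
  rw [HasDerivAt.deriv (f := fun t => -(Real.exp (-(2*π)*Wfun α β γ₁ γ₂ e t)/ Wfun α β γ₁ γ₂ e t) * W1fun α β γ₁ γ₂ e t) hφ]
  simp only [Pi.neg_apply, Pi.div_apply]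
  field_simp
  ring

lemma Rmaj_eq (ξ₁ ξ₂ : ℂ) (t s : ℝ) :
    Rmaj ξ₁ ξ₂ ((t:ℂ) + (s:ℂ)*Complex.I)
      = Wfun ξ₁.re ξ₁.im (s*ξ₁.im + ξ₂.re) (ξ₂.im - s*ξ₁.re) (s^2) t := by
  unfold Rmaj Wfun
  rw [Complex.sq_norm, Complex.sq_norm, Complex.normSq_apply, Complex.normSq_apply]
  simp [Complex.mul_re, Complex.mul_im]
  ring

lemma iteratedDeriv_two_congr {f g : ℝ → ℝ} {s : Set ℝ} (hs : IsOpen s) {x : ℝ}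
    (hx : x ∈ s) (h : Set.EqOn f g s) : iteratedDeriv 2 f x = iteratedDeriv 2 g x := by
  have h1 : Set.EqOn (deriv f) (deriv g) s := fun t ht =>
    Filter.EventuallyEq.deriv_eq (h.eventuallyEq_of_mem (hs.mem_nhds ht))
  rw [show (2:ℕ) = 1+1 from rfl, iteratedDeriv_succ, iteratedDeriv_one,
      iteratedDeriv_succ, iteratedDeriv_one]
  exact Filter.EventuallyEq.deriv_eq (h1.eventuallyEq_of_mem (hs.mem_nhds hx))

lemma combine (N D q p E U1 U2 V1 V2 : ℝ) (hN : N ≠ 0) (hD : D ≠ 0)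
    (hI1 : U1^2 + U2^2 = 16*N^2 + 16*q*N*D) (hI2 : V1 + V2 = 16*N + 8*q*D) :
    E * ((2*p*(2*N/D)+1) * (U1/D^2)^2/(2*N/D)^2 - (V1/D^3)/(2*N/D))
      + E * ((2*p*(2*N/D)+1) * (U2/D^2)^2/(2*N/D)^2 - (V2/D^3)/(2*N/D))
      = (8*p*(2*N/D + 2*q) - 4) * E / D^2 := by
  have hU2 : U2^2 = 16*N^2 + 16*q*N*D - U1^2 := by linarith
  have hV2 : V2 = 16*N + 8*q*D - V1 := by linarith
  rw [div_pow U2, hU2, hV2, div_pow U1]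
  field_simp
  ring

set_option maxHeartbeats 1000000 in
/-- Equation (ddcGrPhiEqn): away from the singularity, the GreenFn function is `C²`
(as a function of the two real variables) and its Euclidean Laplacian equals
`(8π(R + 2q) - 4)·e^{-2πR}/(1 - |Z|²)²`, where `q = |ξ₁|² - |ξ₂|²`. -/
theorem laplacian_Green (ξ₁ ξ₂ : ℂ) (x y : ℝ)
    (hZ : ‖(x : ℂ) + (y : ℂ) * Complex.I‖ < 1)
    (hne : ((x : ℂ) + (y : ℂ) * Complex.I) * ξ₁ ≠ ξ₂) :
    ContDiffAt ℝ 2 (fun p : ℝ × ℝ => GreenFn ξ₁ ξ₂ ((p.1 : ℂ) + (p.2 : ℂ) * Complex.I)) (x, y) ∧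
    iteratedDeriv 2 (fun x' : ℝ => GreenFn ξ₁ ξ₂ ((x' : ℂ) + (y : ℂ) * Complex.I)) x
      + iteratedDeriv 2 (fun y' : ℝ => GreenFn ξ₁ ξ₂ ((x : ℂ) + (y' : ℂ) * Complex.I)) y
      = (8 * π * (Rmaj ξ₁ ξ₂ ((x : ℂ) + (y : ℂ) * Complex.I)
            + 2 * (‖ξ₁‖ ^ 2 - ‖ξ₂‖ ^ 2)) - 4)
          * Real.exp (-2 * π * Rmaj ξ₁ ξ₂ ((x : ℂ) + (y : ℂ) * Complex.I))
          / (1 - ‖(x : ℂ) + (y : ℂ) * Complex.I‖ ^ 2) ^ 2 := by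
  have hZ2 : ‖(x:ℂ)+(y:ℂ)*Complex.I‖ ^ 2 = x^2 + y^2 := by
    rw [Complex.sq_norm, Complex.normSq_apply]
    simp
    ring
  have hDpos : 0 < 1 - x^2 - y^2 := by
    have h1 : ‖(x:ℂ)+(y:ℂ)*Complex.I‖ ^ 2 < 1 := by
      have h0 := norm_nonneg ((x:ℂ)+(y:ℂ)*Complex.I)
      nlinarith
    rw [hZ2] at h1; linarith
  have hNpos : 0 < (x*ξ₁.re-(y*ξ₁.im+ξ₂.re))^2 + (x*ξ₁.im-(ξ₂.im-y*ξ₁.re))^2 := by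
    have h0 : ((x:ℂ)+(y:ℂ)*Complex.I)*ξ₁ - ξ₂ ≠ 0 := sub_ne_zero.mpr hne
    have h1 := Complex.normSq_pos.mpr h0
    have h2 : Complex.normSq (((x:ℂ)+(y:ℂ)*Complex.I)*ξ₁ - ξ₂)
        = (x*ξ₁.re-(y*ξ₁.im+ξ₂.re))^2 + (x*ξ₁.im-(ξ₂.im-y*ξ₁.re))^2 := by
      rw [Complex.normSq_apply]
      simp [Complex.mul_re, Complex.mul_im]
      ring
    rwa [h2] at h1
  constructor
  · -- C² part
    have hρ : ContDiffAt ℝ 2 (fun p : ℝ×ℝ =>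
        2*((p.1*ξ₁.re-(p.2*ξ₁.im+ξ₂.re))^2+(p.1*ξ₁.im-(ξ₂.im-p.2*ξ₁.re))^2)/(1 - p.1^2 - p.2^2))
        (x, y) := by
      apply ContDiffAt.div (by fun_prop) (by fun_prop)
      simpa using hDpos.ne'
    have hFc : ContDiffAt ℝ 2 Ffun
        (2*((x*ξ₁.re-(y*ξ₁.im+ξ₂.re))^2+(x*ξ₁.im-(ξ₂.im-y*ξ₁.re))^2)/(1 - x^2 - y^2)) :=
      F_cd.contDiffAt (Ioi_mem_nhds (div_pos (by linarith) hDpos))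
    have hcomp := hFc.comp (x, y) hρ
    apply hcomp.congr_of_eventuallyEq
    have hSopen : IsOpen {p : ℝ×ℝ | 0 < 1 - p.1^2 - p.2^2 ∧
        0 < (p.1*ξ₁.re-(p.2*ξ₁.im+ξ₂.re))^2+(p.1*ξ₁.im-(ξ₂.im-p.2*ξ₁.re))^2} := by
      have ha : IsOpen {p : ℝ×ℝ | 0 < 1 - p.1^2 - p.2^2} :=
        isOpen_lt continuous_const (by fun_prop)
      have hb : IsOpen {p : ℝ×ℝ |
          0 < (p.1*ξ₁.re-(p.2*ξ₁.im+ξ₂.re))^2+(p.1*ξ₁.im-(ξ₂.im-p.2*ξ₁.re))^2} :=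
        isOpen_lt continuous_const (by fun_prop)
      exact ha.inter hb
    filter_upwards [hSopen.mem_nhds ⟨hDpos, hNpos⟩] with p hp
    have hRp : Rmaj ξ₁ ξ₂ ((p.1:ℂ)+(p.2:ℂ)*Complex.I)
        = Wfun ξ₁.re ξ₁.im (p.2*ξ₁.im+ξ₂.re) (ξ₂.im - p.2*ξ₁.re) (p.2^2) p.1 :=
      Rmaj_eq ξ₁ ξ₂ p.1 p.2
    have hpos : 0 < Rmaj ξ₁ ξ₂ ((p.1:ℂ)+(p.2:ℂ)*Complex.I) := by
      rw [hRp]; unfold Wfun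
      exact div_pos (by linarith [hp.2]) hp.1
    show GreenFn ξ₁ ξ₂ ((p.1:ℂ)+(p.2:ℂ)*Complex.I) = _
    rw [green_eq ξ₁ ξ₂ _ hpos, hRp]
    rfl
  · -- Laplacian
    have hN2 : 0 < (y*(-ξ₁.im)-(ξ₂.re - x*ξ₁.re))^2 + (y*ξ₁.re-(ξ₂.im-x*ξ₁.im))^2 := by
      nlinarith [hNpos]
    have hD2 : 0 < 1 - y^2 - x^2 := by linarith
    have hx2 := second_deriv_dir ξ₁.re ξ₁.im (y*ξ₁.im+ξ₂.re) (ξ₂.im-y*ξ₁.re) (y^2) x hDpos hNpos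
    have hy2 := second_deriv_dir (-ξ₁.im) ξ₁.re (ξ₂.re-x*ξ₁.re) (ξ₂.im-x*ξ₁.im) (x^2) y hD2 hN2
    have hU1open : IsOpen {t : ℝ | 0 < 1 - t^2 - y^2 ∧
        0 < (t*ξ₁.re-(y*ξ₁.im+ξ₂.re))^2+(t*ξ₁.im-(ξ₂.im-y*ξ₁.re))^2} := by
      have ha : IsOpen {t : ℝ | 0 < 1 - t^2 - y^2} :=
        isOpen_lt continuous_const (by fun_prop)
      have hb : IsOpen {t : ℝ |
          0 < (t*ξ₁.re-(y*ξ₁.im+ξ₂.re))^2+(t*ξ₁.im-(ξ₂.im-y*ξ₁.re))^2} :=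
        isOpen_lt continuous_const (by fun_prop)
      exact ha.inter hb
    have hU2open : IsOpen {t : ℝ | 0 < 1 - t^2 - x^2 ∧
        0 < (t*(-ξ₁.im)-(ξ₂.re-x*ξ₁.re))^2+(t*ξ₁.re-(ξ₂.im-x*ξ₁.im))^2} := by
      have ha : IsOpen {t : ℝ | 0 < 1 - t^2 - x^2} :=
        isOpen_lt continuous_const (by fun_prop)
      have hb : IsOpen {t : ℝ |
          0 < (t*(-ξ₁.im)-(ξ₂.re-x*ξ₁.re))^2+(t*ξ₁.re-(ξ₂.im-x*ξ₁.im))^2} :=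
        isOpen_lt continuous_const (by fun_prop)
      exact ha.inter hb
    have hc1 : iteratedDeriv 2 (fun x' : ℝ => GreenFn ξ₁ ξ₂ ((x':ℂ)+(y:ℂ)*Complex.I)) x
        = iteratedDeriv 2
          (fun t => Ffun (Wfun ξ₁.re ξ₁.im (y*ξ₁.im+ξ₂.re) (ξ₂.im-y*ξ₁.re) (y^2) t)) x := by
      refine iteratedDeriv_two_congr hU1open ⟨hDpos, hNpos⟩ (fun t ht => ?_)
      have hpos : 0 < Rmaj ξ₁ ξ₂ ((t:ℂ)+(y:ℂ)*Complex.I) := by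
        rw [Rmaj_eq]; unfold Wfun
        exact div_pos (by linarith [ht.2]) ht.1
      show GreenFn ξ₁ ξ₂ ((t:ℂ)+(y:ℂ)*Complex.I) = _
      rw [green_eq ξ₁ ξ₂ _ hpos, Rmaj_eq]
    have hc2 : iteratedDeriv 2 (fun y' : ℝ => GreenFn ξ₁ ξ₂ ((x:ℂ)+(y':ℂ)*Complex.I)) y
        = iteratedDeriv 2
          (fun t => Ffun (Wfun (-ξ₁.im) ξ₁.re (ξ₂.re-x*ξ₁.re) (ξ₂.im-x*ξ₁.im) (x^2) t)) y := by
      refine iteratedDeriv_two_congr hU2open ⟨hD2, hN2⟩ (fun t ht => ?_)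
      have hWW : Wfun ξ₁.re ξ₁.im (t*ξ₁.im+ξ₂.re) (ξ₂.im-t*ξ₁.re) (t^2) x
          = Wfun (-ξ₁.im) ξ₁.re (ξ₂.re-x*ξ₁.re) (ξ₂.im-x*ξ₁.im) (x^2) t := by
        unfold Wfun
        rw [show (1:ℝ) - x^2 - t^2 = 1 - t^2 - x^2 by ring]
        congr 1
        ring
      have hpos : 0 < Rmaj ξ₁ ξ₂ ((x:ℂ)+(t:ℂ)*Complex.I) := by
        rw [Rmaj_eq, hWW]; unfold Wfun
        exact div_pos (by linarith [ht.2]) ht.1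
      show GreenFn ξ₁ ξ₂ ((x:ℂ)+(t:ℂ)*Complex.I) = _
      rw [green_eq ξ₁ ξ₂ _ hpos, Rmaj_eq, hWW]
    have hq1 : ‖ξ₁‖ ^ 2 = ξ₁.re^2 + ξ₁.im^2 := by
      rw [Complex.sq_norm, Complex.normSq_apply]; ring
    have hq2 : ‖ξ₂‖ ^ 2 = ξ₂.re^2 + ξ₂.im^2 := by
      rw [Complex.sq_norm, Complex.normSq_apply]; ring
    have hWW' : Wfun (-ξ₁.im) ξ₁.re (ξ₂.re-x*ξ₁.re) (ξ₂.im-x*ξ₁.im) (x^2) y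
        = Wfun ξ₁.re ξ₁.im (y*ξ₁.im+ξ₂.re) (ξ₂.im-y*ξ₁.re) (y^2) x := by
      unfold Wfun
      rw [show (1:ℝ) - y^2 - x^2 = 1 - x^2 - y^2 by ring]
      congr 1
      ring
    rw [hc1, hc2, hx2, hy2, hWW', Rmaj_eq ξ₁ ξ₂ x y, hq1, hq2, hZ2,
      show (-2*π*Wfun ξ₁.re ξ₁.im (y*ξ₁.im+ξ₂.re) (ξ₂.im-y*ξ₁.re) (y^2) x : ℝ)
        = -(2*π)*Wfun ξ₁.re ξ₁.im (y*ξ₁.im+ξ₂.re) (ξ₂.im-y*ξ₁.re) (y^2) x by ring]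
    set E := Real.exp (-(2*π)*Wfun ξ₁.re ξ₁.im (y*ξ₁.im+ξ₂.re) (ξ₂.im-y*ξ₁.re) (y^2) x) with hE
    have h1 : (1:ℝ) - x^2 - y^2 ≠ 0 := hDpos.ne'
    have h4 : (1:ℝ) - y^2 - x^2 ≠ 0 := hD2.ne'
    have h2 := hNpos.ne'
    have h3 := hN2.ne'
    unfold Wfun W1fun W2fun
    rw [show (1:ℝ)-y^2-x^2 = 1-x^2-y^2 by ring,
        show (1:ℝ)-(x^2+y^2) = 1-x^2-y^2 by ring]
    exact combine _ _ _ _ _ _ _ _ _ hNpos.ne' hDpos.ne' (by ring) (by ring)
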